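/- Let ρ0, ρ1 and E be n×n complex positive semidefinite matrices and let U be a unitary matrix. Then |Tr(U · √ρ0 · E · √ρ1)| ≤ √(Tr(E ρ0)) · √(Tr(E ρ1)). -/

import Mathlib

open Matrix
open scoped ComplexOrder

/-- The positive semidefinite square root of a matrix (zero if the matrix is not
positive semidefinite). -/
noncomputable def msqrt {n : ℕ} (A : Matrix (Fin n) (Fin n) ℂ) : Matrix (Fin n) (Fin n) ℂ :=
  open scoped Classical in
  if h : A.PosSemidef then
    h.1.eigenvectorUnitary.1 * diagonal ((↑) ∘ Real.sqrt ∘ h.1.eigenvalues) *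
      (star h.1.eigenvectorUnitary : Matrix (Fin n) (Fin n) ℂ)
  else 0

lemma msqrt_conjTranspose {n : ℕ} {A : Matrix (Fin n) (Fin n) ℂ} (hA : A.PosSemidef) :
    (msqrt A)ᴴ = msqrt A := by
  rw [msqrt, dif_pos hA]
  simp [Matrix.conjTranspose_mul, Matrix.star_eq_conjTranspose, Matrix.diagonal_conjTranspose,
    Matrix.mul_assoc]
  congr 3
  funext i
  simp

lemma msqrt_mul_self {n : ℕ} {A : Matrix (Fin n) (Fin n) ℂ} (hA : A.PosSemidef) :
    msqrt A * msqrt A = A := by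
  rw [msqrt, dif_pos hA]
  have hu : (star hA.1.eigenvectorUnitary : Matrix (Fin n) (Fin n) ℂ) *
      hA.1.eigenvectorUnitary.1 = 1 := Unitary.coe_star_mul_self _
  simp only [Matrix.mul_assoc]
  rw [← Matrix.mul_assoc (star hA.1.eigenvectorUnitary : Matrix (Fin n) (Fin n) ℂ), hu,
    Matrix.one_mul, ← Matrix.mul_assoc (diagonal _), diagonal_mul_diagonal]
  conv_rhs => rw [hA.1.spectral_theorem]
  rw [Unitary.conjStarAlgAut_apply, Matrix.mul_assoc]
  congr 3
  funext i
  simp only [Function.comp_apply]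
  rw [← Complex.ofReal_mul, Real.mul_self_sqrt (hA.eigenvalues_nonneg i)]
  rfl

lemma trace_cs {n : ℕ} (A B : Matrix (Fin n) (Fin n) ℂ) :
    ‖(Aᴴ * B).trace‖ ≤
      Real.sqrt (Aᴴ * A).trace.re * Real.sqrt (Bᴴ * B).trace.re := by
  classical
  set a : EuclideanSpace ℂ (Fin n × Fin n) := WithLp.toLp 2 (fun p => A p.1 p.2) with ha
  set b : EuclideanSpace ℂ (Fin n × Fin n) := WithLp.toLp 2 (fun p => B p.1 p.2) with hb
  have key : ‖(inner ℂ a b : ℂ)‖ ≤ ‖a‖ * ‖b‖ := norm_inner_le_norm a b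
  have hiner : (inner ℂ a b : ℂ) = (Aᴴ * B).trace := by
    simp only [PiLp.inner_apply, RCLike.inner_apply, Matrix.trace, Matrix.diag,
      Matrix.mul_apply, Matrix.conjTranspose_apply, Fintype.sum_prod_type, ha, hb]
    rw [Finset.sum_comm]
    exact Finset.sum_congr rfl fun _ _ => Finset.sum_congr rfl fun _ _ => mul_comm _ _
  have hnorm : ∀ (C : Matrix (Fin n) (Fin n) ℂ) (c : EuclideanSpace ℂ (Fin n × Fin n)),
      (∀ p, c p = C p.1 p.2) → ‖c‖ = Real.sqrt (Cᴴ * C).trace.re := by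
    intro C c hc
    rw [EuclideanSpace.norm_eq]
    congr 1
    simp only [Matrix.trace, Matrix.diag, Matrix.mul_apply, Matrix.conjTranspose_apply,
      Complex.re_sum, Fintype.sum_prod_type, hc]
    rw [Finset.sum_comm]
    congr 1; ext j; congr 1; ext i
    simp only [Complex.star_def, ← Complex.normSq_eq_conj_mul_self]
    rw [← Complex.sq_norm]
    norm_cast
  rw [hiner] at key
  rw [hnorm A a (fun p => rfl), hnorm B b (fun p => rfl)] at key
  simpa using key

theorem main' {n : ℕ}
    (ρ0 ρ1 E U : Matrix (Fin n) (Fin n) ℂ)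
    (hρ0 : ρ0.PosSemidef) (hρ1 : ρ1.PosSemidef) (hE : E.PosSemidef)
    (hU : Uᴴ * U = 1) (hU' : U * Uᴴ = 1) :
    ‖((U * msqrt ρ0 * E * msqrt ρ1).trace)‖ ≤
      Real.sqrt ((E * ρ0).trace.re) * Real.sqrt ((E * ρ1).trace.re) := by
  set S0 := msqrt ρ0 with hS0
  set S1 := msqrt ρ1 with hS1
  set SE := msqrt E with hSE
  have h0 : S0ᴴ = S0 := msqrt_conjTranspose hρ0
  have h1 : S1ᴴ = S1 := msqrt_conjTranspose hρ1
  have hEh : SEᴴ = SE := msqrt_conjTranspose hE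
  have key := trace_cs (S1 * SE) (U * S0 * SE)
  have eq1 : ((S1 * SE)ᴴ * (U * S0 * SE)).trace = (U * S0 * E * S1).trace := by
    rw [Matrix.conjTranspose_mul, h1, hEh, Matrix.trace_mul_comm]
    congr 1
    simp only [Matrix.mul_assoc]
    rw [← Matrix.mul_assoc SE SE, msqrt_mul_self hE]
  have m2 : (S1 * SE)ᴴ * (S1 * SE) = SE * ρ1 * SE := by
    rw [Matrix.conjTranspose_mul, h1, hEh,
      show SE * S1 * (S1 * SE) = SE * (S1 * S1) * SE by simp only [Matrix.mul_assoc],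
      msqrt_mul_self hρ1]
  have eq2 : ((S1 * SE)ᴴ * (S1 * SE)).trace = (E * ρ1).trace := by
    rw [m2, Matrix.trace_mul_cycle, msqrt_mul_self hE]
  have m3 : (U * S0 * SE)ᴴ * (U * S0 * SE) = SE * ρ0 * SE := by
    rw [Matrix.conjTranspose_mul, Matrix.conjTranspose_mul, h0, hEh,
      show SE * (S0 * Uᴴ) * (U * S0 * SE) = SE * S0 * ((Uᴴ * U) * (S0 * SE)) by
        simp only [Matrix.mul_assoc],
      hU, one_mul,
      show SE * S0 * (S0 * SE) = SE * (S0 * S0) * SE by simp only [Matrix.mul_assoc],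
      msqrt_mul_self hρ0]
  have eq3 : ((U * S0 * SE)ᴴ * (U * S0 * SE)).trace = (E * ρ0).trace := by
    rw [m3, Matrix.trace_mul_cycle, msqrt_mul_self hE]
  rw [eq1, eq2, eq3] at key
  simpa [mul_comm] using key

/-- Cauchy–Schwarz-type bound: for positive semidefinite `ρ0, ρ1, E` and a
unitary `U`, `|Tr(U √ρ0 E √ρ1)| ≤ √Tr(E ρ0) · √Tr(E ρ1)`. -/
theorem abs_trace_le_sqrt_mul_sqrt {n : ℕ}
    (ρ0 ρ1 E U : Matrix (Fin n) (Fin n) ℂ)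
    (hρ0 : ρ0.PosSemidef) (hρ1 : ρ1.PosSemidef) (hE : E.PosSemidef)
    (hU : Uᴴ * U = 1) (hU' : U * Uᴴ = 1) :
    ‖((U * msqrt ρ0 * E * msqrt ρ1).trace)‖ ≤
      Real.sqrt ((E * ρ0).trace.re) * Real.sqrt ((E * ρ1).trace.re) := by
  exact main' ρ0 ρ1 E U hρ0 hρ1 hE hU hU'
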